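/- arXiv:1902.03391 — 2 statements merged into one kernel-verified Lean document; each statement's English description precedes it below -/
import Mathlib

section
/- Let H be a connected finite simple graph on n ≥ 4 vertices and let u be a median of H, i.e., a vertex minimizing δ(u) = Σ_{v ∈ V(H)} dist_H(u, v). Then WL(W_n, H) ≥ (n − 1) + δ(u): every bijection f from the vertices of the wheel W_n to the vertices of H has wirelength at least (n − 1) + δ(u). -/
open SimpleGraph

/-- Wheel graph on `Fin n`: hub `0`, rim cycle `1, …, n-1`. -/
def wheelGraph (n : ℕ) : SimpleGraph (Fin n) where
  Adj x y := x ≠ y ∧ (x.val = 0 ∨ y.val = 0 ∨ y.val = x.val + 1 ∨ x.val = y.val + 1 ∨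
    (x.val = 1 ∧ y.val = n - 1) ∨ (y.val = 1 ∧ x.val = n - 1))
  symm := ⟨by rintro x y ⟨h1, h2⟩; exact ⟨h1.symm, by tauto⟩⟩
  loopless := ⟨by rintro x ⟨h1, -⟩; exact h1 rfl⟩

open scoped Classical in
/-- The wirelength of a vertex mapping `f`: the sum over edges of `G` of the distance
in `H` between the images of the endpoints. -/
noncomputable def wirelength {α β : Type*} [Fintype α] (G : SimpleGraph α) (H : SimpleGraph β)
    (f : α → β) : ℕ :=
  ∑ e ∈ G.edgeSet.toFinset,
    Sym2.lift ⟨fun a b => H.dist (f a) (f b), fun _ _ => SimpleGraph.dist_comm⟩ e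

theorem wirelength_wheel_lower_bound
    {V : Type*} [Fintype V] [DecidableEq V] (H : SimpleGraph V) (n : ℕ)
    (hcard : Fintype.card V = n) (hn : 4 ≤ n) (hconn : H.Connected)
    (u : V) (hmed : ∀ v : V, (∑ w : V, H.dist u w) ≤ ∑ w : V, H.dist v w)
    (f : Fin n ≃ V) :
    (n - 1) + ∑ w : V, H.dist u w ≤ wirelength (wheelGraph n) H f := by
  classical
  set w : Sym2 (Fin n) → ℕ :=
    Sym2.lift ⟨fun a b => H.dist (f a) (f b), fun _ _ => SimpleGraph.dist_comm⟩ with hw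
  have hnpos : 0 < n := by omega
  set hub : Fin n := ⟨0, hnpos⟩ with hhub
  have hval : ∀ j : Fin n, j ≠ hub ↔ 1 ≤ j.val := by
    intro j
    constructor
    · intro h; rcases Nat.eq_zero_or_pos j.val with h0 | h1
      · exact absurd (Fin.ext h0) h
      · exact h1
    · intro h1 h; rw [h] at h1; simp [hhub] at h1
  set R : Finset (Fin n) := Finset.univ.erase hub with hR
  set next : Fin n → Fin n := fun j =>
    if j.val = n - 1 then ⟨1, by omega⟩ else ⟨(j.val + 1) % n, Nat.mod_lt _ hnpos⟩ with hnext
  have hnextval : ∀ j : Fin n, (next j).val = if j.val = n - 1 then 1 else j.val + 1 := by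
    intro j
    by_cases h : j.val = n - 1 <;> simp [hnext, h]
    have : j.val + 1 < n := by omega
    exact Nat.mod_eq_of_lt this
  set A : Finset (Sym2 (Fin n)) := R.image (fun k => s(hub, k)) with hA
  set B : Finset (Sym2 (Fin n)) := R.image (fun j => s(j, next j)) with hB
  -- facts about next values on rim
  have hnext_ne : ∀ j : Fin n, j ∈ R → next j ≠ j := by
    intro j hj heq
    have h1 : 1 ≤ j.val := (hval j).mp (Finset.ne_of_mem_erase hj)
    have h2 : j.val < n := j.isLt
    have := hnextval j
    rw [heq] at this
    by_cases h : j.val = n - 1 <;> simp [h] at this <;> omega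
  have hnext_pos : ∀ j : Fin n, j ∈ R → 1 ≤ (next j).val := by
    intro j hj
    have h1 : 1 ≤ j.val := (hval j).mp (Finset.ne_of_mem_erase hj)
    rw [hnextval j]; split <;> omega
  -- A and B subsets of edge set
  have hsub : A ∪ B ⊆ (wheelGraph n).edgeSet.toFinset := by
    intro e he
    rw [Finset.mem_union] at he
    rw [Set.mem_toFinset]
    rcases he with he | he
    · rw [hA, Finset.mem_image] at he
      obtain ⟨k, hk, rfl⟩ := he
      rw [SimpleGraph.mem_edgeSet]
      exact ⟨(Finset.ne_of_mem_erase hk).symm, Or.inl rfl⟩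
    · rw [hB, Finset.mem_image] at he
      obtain ⟨j, hj, rfl⟩ := he
      rw [SimpleGraph.mem_edgeSet]
      have h1 : 1 ≤ j.val := (hval j).mp (Finset.ne_of_mem_erase hj)
      have h2 : j.val < n := j.isLt
      refine ⟨(hnext_ne j hj).symm, ?_⟩
      have := hnextval j
      by_cases h : j.val = n - 1
      · simp [h] at this
        right; right; right; right; right
        exact ⟨this, h⟩
      · simp [h] at this
        right; right; left; exact this.symm ▸ rfl
  -- disjoint
  have hdisj : Disjoint A B := by
    rw [Finset.disjoint_left]
    intro e heA heB
    rw [hA, Finset.mem_image] at heA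
    rw [hB, Finset.mem_image] at heB
    obtain ⟨k, hk, rfl⟩ := heA
    obtain ⟨j, hj, hje⟩ := heB
    have hhubmem : hub ∈ s(j, next j) := by rw [hje]; simp
    rw [Sym2.mem_iff] at hhubmem
    have h1 : 1 ≤ j.val := (hval j).mp (Finset.ne_of_mem_erase hj)
    have h2 : 1 ≤ (next j).val := hnext_pos j hj
    rcases hhubmem with h | h
    · rw [← h] at h1; simp [hhub] at h1
    · rw [← h] at h2; simp [hhub] at h2
  -- sum over A
  have hAsum : ∑ e ∈ A, w e = ∑ k ∈ R, H.dist (f hub) (f k) := by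
    rw [hA, Finset.sum_image (fun a _ b _ hab => Sym2.congr_right.mp hab)]
    simp [hw]
  have hAge : (∑ w : V, H.dist u w) ≤ ∑ e ∈ A, w e := by
    rw [hAsum]
    have : ∑ k ∈ R, H.dist (f hub) (f k) = ∑ k : Fin n, H.dist (f hub) (f k) := by
      rw [hR]
      rw [← Finset.sum_erase_add _ _ (Finset.mem_univ hub)]
      simp
    rw [this]
    have := Equiv.sum_comp f (fun v => H.dist (f hub) v)
    rw [this]
    exact hmed (f hub)
  -- injectivity for B and card
  have hBcard : B.card = n - 1 := by
    rw [hB, Finset.card_image_of_injOn, hR, Finset.card_erase_of_mem (Finset.mem_univ hub)]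
    · simp
    · intro a ha b hb hab
      have ha1 : 1 ≤ a.val := (hval a).mp (Finset.ne_of_mem_erase ha)
      have hb1 : 1 ≤ b.val := (hval b).mp (Finset.ne_of_mem_erase hb)
      have ha2 : a.val < n := a.isLt
      have hb2 : b.val < n := b.isLt
      rw [Sym2.eq_iff] at hab
      rcases hab with ⟨h, -⟩ | ⟨h1, h2⟩
      · exact h
      · -- a = next b and next a = b
        have hva := hnextval a
        have hvb := hnextval b
        apply Fin.ext
        have e1 : a.val = (next b).val := by rw [h1]
        have e2 : (next a).val = b.val := by rw [h2]
        rw [hvb] at e1; rw [hva] at e2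
        by_cases h : a.val = n - 1 <;> by_cases h' : b.val = n - 1 <;>
          simp [h, h'] at e1 e2 <;> omega
  have hBge : (n - 1 : ℕ) ≤ ∑ e ∈ B, w e := by
    calc (n - 1 : ℕ) = ∑ _e ∈ B, 1 := by rw [Finset.sum_const, hBcard]; simp
    _ ≤ ∑ e ∈ B, w e := by
        apply Finset.sum_le_sum
        intro e he
        rw [hB, Finset.mem_image] at he
        obtain ⟨j, hj, rfl⟩ := he
        have : w s(j, next j) = H.dist (f j) (f (next j)) := rfl
        rw [this]
        exact hconn.pos_dist_of_ne (fun hc => (hnext_ne j hj) (f.injective hc).symm)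
  -- combine
  have : ∑ e ∈ A ∪ B, w e ≤ wirelength (wheelGraph n) H f := by
    unfold wirelength
    exact Finset.sum_le_sum_of_subset hsub
  calc (n - 1) + ∑ w : V, H.dist u w ≤ (∑ e ∈ B, w e) + ∑ e ∈ A, w e :=
        Nat.add_le_add hBge hAge
    _ = ∑ e ∈ A ∪ B, w e := by rw [Finset.sum_union hdisj, Nat.add_comm]
    _ ≤ _ := this
end

section
/- Let H be a connected finite simple graph on n ≥ 4 vertices and let u be a median of H, i.e., a vertex minimizing δ(u) = Σ_{v ∈ V(H)} dist_H(u, v). If H − u contains a Hamiltonian cycle, then WL(W_n, H) = (n − 1) + δ(u); in particular there exists a bijection f from the vertices of the wheel W_n to the vertices of H with wirelength exactly (n − 1) + δ(u). -/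
open SimpleGraph

def nxt (n : ℕ) (i : Fin n) : Fin n :=
  ⟨(if i.val = n - 1 then 1 else i.val + 1) % n, Nat.mod_lt _ i.pos⟩

lemma nxt_val {n : ℕ} (hn : 4 ≤ n) (i : Fin n) :
    (nxt n i).val = if i.val = n - 1 then 1 else i.val + 1 := by
  have := i.isLt
  simp only [nxt]
  split <;> apply Nat.mod_eq_of_lt <;> omega

lemma wheel_adj_nxt {n : ℕ} (hn : 4 ≤ n) (i : Fin n) (hi : i.val ≠ 0) :
    (wheelGraph n).Adj i (nxt n i) := by
  have hv := nxt_val hn i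
  have hlt := i.isLt
  constructor
  · intro h
    rw [← h] at hv
    split_ifs at hv <;> omega
  · by_cases hc : i.val = n - 1
    · exact Or.inr (Or.inr (Or.inr (Or.inr (Or.inr ⟨by rw [hv, if_pos hc], hc⟩))))
    · exact Or.inr (Or.inr (Or.inl (by rw [hv, if_neg hc])))

lemma mem_wheel_edge {n : ℕ} (hn : 4 ≤ n) (z : Fin n) (hz : z.val = 0) (e : Sym2 (Fin n)) :
    e ∈ (wheelGraph n).edgeSet ↔
      e ∈ ((Finset.univ.erase z).image fun i => s(z, i)) ∪
          ((Finset.univ.erase z).image fun i => s(i, nxt n i)) := by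
  induction e using Sym2.ind with
  | _ x y =>
    simp only [SimpleGraph.mem_edgeSet, Finset.mem_union, Finset.mem_image,
      Finset.mem_erase, Finset.mem_univ, and_true]
    constructor
    · rintro ⟨hne, hadj⟩
      have hxy : x.val ≠ y.val := fun h => hne (Fin.ext h)
      have hx := x.isLt; have hy := y.isLt
      by_cases hx0 : x.val = 0
      · refine Or.inl ⟨y, fun h => hxy (by rw [hx0, h, hz]), ?_⟩
        rw [show z = x from Fin.ext (by rw [hz, hx0])]
      · by_cases hy0 : y.val = 0
        · refine Or.inl ⟨x, fun h => hxy (by rw [hy0, h, hz]), ?_⟩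
          rw [show z = y from Fin.ext (by rw [hz, hy0])]
          exact Sym2.eq_swap
        · right
          rcases hadj with h | h | h | h | ⟨h1, h2⟩ | ⟨h1, h2⟩
          · exact absurd h hx0
          · exact absurd h hy0
          · refine ⟨x, fun hc => hx0 (by rw [hc, hz]), ?_⟩
            rw [show nxt n x = y from Fin.ext (by rw [nxt_val hn, if_neg (by omega)]; omega)]
          · refine ⟨y, fun hc => hy0 (by rw [hc, hz]), ?_⟩
            rw [show nxt n y = x from Fin.ext (by rw [nxt_val hn, if_neg (by omega)]; omega)]
            exact Sym2.eq_swap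
          · refine ⟨y, fun hc => hy0 (by rw [hc, hz]), ?_⟩
            rw [show nxt n y = x from Fin.ext (by rw [nxt_val hn, if_pos h2]; omega)]
            exact Sym2.eq_swap
          · refine ⟨x, fun hc => hx0 (by rw [hc, hz]), ?_⟩
            rw [show nxt n x = y from Fin.ext (by rw [nxt_val hn, if_pos h2]; omega)]
    · rintro (⟨i, hiz, hs⟩ | ⟨i, hiz, hs⟩) <;>
        have hi0 : i.val ≠ 0 := fun h => hiz (Fin.ext (h.trans hz.symm)) <;>
        rw [Sym2.eq_iff] at hs
      · rcases hs with ⟨h1, h2⟩ | ⟨h1, h2⟩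
        · subst h1; subst h2
          exact ⟨fun h => hiz h.symm, Or.inl hz⟩
        · subst h1; subst h2
          exact ⟨fun h => hiz h, Or.inr (Or.inl hz)⟩
      · rcases hs with ⟨h1, h2⟩ | ⟨h1, h2⟩
        · subst h1; subst h2
          exact wheel_adj_nxt hn _ hi0
        · subst h1; subst h2
          exact (wheel_adj_nxt hn _ hi0).symm

lemma wirelength_wheel {n : ℕ} {V : Type*} [Fintype V] (H : SimpleGraph V) (hn : 4 ≤ n)
    (z : Fin n) (hz : z.val = 0) (f : Fin n → V) :
    wirelength (wheelGraph n) H f =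
      (∑ i ∈ Finset.univ.erase z, H.dist (f z) (f i)) +
      (∑ i ∈ Finset.univ.erase z, H.dist (f i) (f (nxt n i))) := by
  classical
  have hset : (wheelGraph n).edgeSet.toFinset =
      ((Finset.univ.erase z).image fun i => s(z, i)) ∪
      ((Finset.univ.erase z).image fun i => s(i, nxt n i)) :=
    Finset.ext fun e => by rw [Set.mem_toFinset, mem_wheel_edge hn z hz e]
  have hnxt_ne_z : ∀ i : Fin n, i ∈ Finset.univ.erase z → nxt n i ≠ z := by
    intro i hi h
    have hi0 : i.val ≠ 0 := fun h0 =>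
      (Finset.mem_erase.1 hi).1 (Fin.ext (h0.trans hz.symm))
    have := nxt_val hn i
    rw [h, hz] at this
    have := i.isLt
    split_ifs at * <;> omega
  have hdisj : Disjoint ((Finset.univ.erase z).image fun i : Fin n => s(z, i))
      ((Finset.univ.erase z).image fun i => s(i, nxt n i)) := by
    rw [Finset.disjoint_left]
    rintro e he1 he2
    obtain ⟨i, hi, rfl⟩ := Finset.mem_image.1 he1
    obtain ⟨j, hj, hs⟩ := Finset.mem_image.1 he2
    rw [Sym2.eq_iff] at hs
    rcases hs with ⟨h1, h2⟩ | ⟨h1, h2⟩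
    · exact (Finset.mem_erase.1 hj).1 h1
    · exact hnxt_ne_z j hj h2
  have hinj1 : Set.InjOn (fun i : Fin n => s(z, i)) (Finset.univ.erase z) := by
    intro i hi j hj h
    rw [Sym2.eq_iff] at h
    rcases h with ⟨-, h⟩ | ⟨h1, h2⟩
    · exact h
    · exact absurd h2 (Finset.mem_erase.1 (Finset.mem_coe.1 hi)).1
  have hinj2 : Set.InjOn (fun i : Fin n => s(i, nxt n i)) (Finset.univ.erase z) := by
    intro i hi j hj h
    have hi0 : i.val ≠ 0 := fun h0 =>
      (Finset.mem_erase.1 (Finset.mem_coe.1 hi)).1 (Fin.ext (h0.trans hz.symm))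
    have hj0 : j.val ≠ 0 := fun h0 =>
      (Finset.mem_erase.1 (Finset.mem_coe.1 hj)).1 (Fin.ext (h0.trans hz.symm))
    rw [Sym2.eq_iff] at h
    rcases h with ⟨h1, -⟩ | ⟨h1, h2⟩
    · exact h1
    · exfalso
      have hv1 := nxt_val hn i; have hv2 := nxt_val hn j
      rw [h2] at hv1
      have h1' : i.val = (nxt n j).val := by rw [h1]
      rw [hv2] at h1'
      have := i.isLt; have := j.isLt
      split_ifs at hv1 h1' <;> omega
  rw [wirelength, hset, Finset.sum_union hdisj, Finset.sum_image hinj1, Finset.sum_image hinj2]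
  simp [Sym2.lift_mk]

theorem wirelength_wheel_eq_of_hamiltonian
    {V : Type*} [Fintype V] [DecidableEq V] (H : SimpleGraph V) (n : ℕ)
    (hcard : Fintype.card V = n) (hn : 4 ≤ n) (hconn : H.Connected)
    (u : V) (hmed : ∀ v : V, (∑ w : V, H.dist u w) ≤ ∑ w : V, H.dist v w)
    (hham : ∃ (a : ({u}ᶜ : Set V)) (c : (H.induce ({u}ᶜ : Set V)).Walk a a),
      c.IsHamiltonianCycle) :
    (∀ f : Fin n ≃ V, (n - 1) + ∑ w : V, H.dist u w ≤ wirelength (wheelGraph n) H f) ∧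
    (∃ f : Fin n ≃ V, wirelength (wheelGraph n) H f = (n - 1) + ∑ w : V, H.dist u w) := by
  classical
  have hn0 : 0 < n := by omega
  set z : Fin n := ⟨0, hn0⟩ with hzdef
  have hz : z.val = 0 := rfl
  have hScard : (Finset.univ.erase z).card = n - 1 := by
    rw [Finset.card_erase_of_mem (Finset.mem_univ _), Finset.card_univ, Fintype.card_fin]
  have hsum1 : ∀ f : Fin n → V, (∑ i ∈ Finset.univ.erase z, H.dist (f z) (f i))
      = ∑ i : Fin n, H.dist (f z) (f i) := by
    intro f
    have h := Finset.add_sum_erase Finset.univ (fun i => H.dist (f z) (f i)) (Finset.mem_univ z)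
    simp only [SimpleGraph.dist_self, zero_add] at h
    exact h
  have hnxt0 : ∀ i : Fin n, i.val ≠ 0 → (nxt n i).val ≠ 0 := by
    intro i hi
    have := nxt_val hn i
    have := i.isLt
    split_ifs at * <;> omega
  constructor
  · -- lower bound
    intro f
    rw [wirelength_wheel H hn z hz f, hsum1 f, Equiv.sum_comp f (fun w => H.dist (f z) w)]
    have hA : (∑ w, H.dist u w) ≤ ∑ w, H.dist (f z) w := hmed _
    have hB : (n - 1) ≤ ∑ i ∈ Finset.univ.erase z, H.dist (f i) (f (nxt n i)) := by
      calc (n - 1) = ∑ _i ∈ Finset.univ.erase z, 1 := by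
            rw [Finset.sum_const, hScard, smul_eq_mul, mul_one]
        _ ≤ _ := by
            refine Finset.sum_le_sum fun i hi => ?_
            have hi0 : i.val ≠ 0 := fun h0 =>
              (Finset.mem_erase.1 hi).1 (Fin.ext (h0.trans hz.symm))
            have hne : f i ≠ f (nxt n i) :=
              f.injective.ne (wheel_adj_nxt hn i hi0).ne
            exact hconn.pos_dist_of_ne hne
    omega
  · -- upper bound
    obtain ⟨a, c, hc⟩ := hham
    have hcS : Fintype.card ({u}ᶜ : Set V) = n - 1 := by
      rw [Fintype.card_compl_set]
      simp [hcard]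
    set L : List ({u}ᶜ : Set V) := c.support.tail with hLdef
    have hLlen : L.length = n - 1 := by
      show c.support.tail.length = n - 1
      rw [List.length_tail, Walk.length_support, Nat.add_sub_cancel, hc.length_eq, hcS]
    have hLnodup : L.Nodup := hc.isCycle.support_nodup
    have hLmem : ∀ x : ({u}ᶜ : Set V), x ∈ L := by
      intro x
      have h := hc.isHamiltonian_tail.mem_support x
      rwa [Walk.support_tail_of_not_nil c hc.isCycle.not_nil] at h
    have hLne : L ≠ [] := by
      intro h
      rw [h] at hLlen
      simp at hLlen
      omega
    have hsup : c.support = a :: L := c.support_eq_cons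
    have hchain : List.Chain' (H.induce ({u}ᶜ : Set V)).Adj (a :: L) :=
      hsup ▸ c.isChain_adj_support
    have hadjchain := List.isChain_iff_getElem.1 hchain
    have hadj0 : ∀ (h : 0 < L.length), H.Adj a (L.get ⟨0, h⟩) := by
      intro h
      have h2 := hadjchain 0 (by simp; omega)
      simpa using h2
    have hadjk : ∀ (k : ℕ) (h : k + 1 < L.length),
        H.Adj (L.get ⟨k, by omega⟩) (L.get ⟨k + 1, h⟩) := by
      intro k h
      have h2 := hadjchain (k + 1) (by simp; omega)
      simpa using h2
    have hlast : ∀ (h : L.length - 1 < L.length), L.get ⟨L.length - 1, h⟩ = a := by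
      intro h
      have h1 := Walk.getLast_support c
      simp only [hsup] at h1
      rw [List.getLast_cons hLne] at h1
      rw [List.get_eq_getElem, ← List.getLast_eq_getElem]
      exact h1
    have hlen' : ∀ i : Fin n, i.val ≠ 0 → i.val - 1 < L.length := by
      intro i hi
      have := i.isLt
      rw [hLlen]
      omega
    set g : Fin n → V := fun i =>
      if h : i.val = 0 then u else (L.get ⟨i.val - 1, hlen' i h⟩ : V) with hgdef
    have hg0 : ∀ i : Fin n, i.val = 0 → g i = u := fun i h => dif_pos h
    have hg1 : ∀ (i : Fin n) (h : i.val ≠ 0), g i = (L.get ⟨i.val - 1, hlen' i h⟩ : V) :=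
      fun i h => dif_neg h
    have hgetc : ∀ (k1 k2 : ℕ) (h1 : k1 < L.length) (h2 : k2 < L.length), k1 = k2 →
        (L.get ⟨k1, h1⟩ : V) = (L.get ⟨k2, h2⟩ : V) := by
      intro k1 k2 h1 h2 h
      subst h
      rfl
    have hgne : ∀ (i : Fin n) (h : i.val ≠ 0), g i ≠ u := by
      intro i h hc'
      rw [hg1 i h] at hc'
      exact (L.get ⟨i.val - 1, hlen' i h⟩).2 hc'
    have hginj : Function.Injective g := by
      intro i j hij
      by_cases hi : i.val = 0 <;> by_cases hj : j.val = 0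
      · exact Fin.ext (hi.trans hj.symm)
      · exact absurd ((hg0 i hi) ▸ hij).symm (hgne j hj)
      · exact absurd ((hg0 j hj) ▸ hij) (hgne i hi)
      · rw [hg1 i hi, hg1 j hj] at hij
        have h2 := Subtype.coe_injective hij
        have hidx := (List.Nodup.get_inj_iff hLnodup).1 h2
        have h3 : i.val - 1 = j.val - 1 := congrArg Fin.val hidx
        have := i.isLt; have := j.isLt
        exact Fin.ext (by omega)
    have hbij : Function.Bijective g :=
      (Fintype.bijective_iff_injective_and_card g).2 ⟨hginj, by simp [hcard]⟩
    refine ⟨Equiv.ofBijective g hbij, ?_⟩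
    have hfg : ∀ i, (Equiv.ofBijective g hbij) i = g i := fun i => rfl
    have hgz : g z = u := hg0 z hz
    rw [wirelength_wheel H hn z hz]
    have e1 : (∑ i ∈ Finset.univ.erase z, H.dist ((Equiv.ofBijective g hbij) z)
        ((Equiv.ofBijective g hbij) i)) = ∑ w : V, H.dist u w := by
      rw [hsum1]
      simp only [hfg, hgz]
      exact Equiv.sum_comp (Equiv.ofBijective g hbij) (fun w => H.dist u w)
    have e2 : (∑ i ∈ Finset.univ.erase z, H.dist ((Equiv.ofBijective g hbij) i)
        ((Equiv.ofBijective g hbij) (nxt n i))) = n - 1 := by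
      rw [Finset.sum_congr rfl (fun i hi => ?_), Finset.sum_const, hScard, smul_eq_mul, mul_one]
      have hi0 : i.val ≠ 0 := fun h0 =>
        (Finset.mem_erase.1 hi).1 (Fin.ext (h0.trans hz.symm))
      have hni0 := hnxt0 i hi0
      have hnv := nxt_val hn i
      have hilt := i.isLt
      rw [hfg, hfg, hg1 i hi0, hg1 (nxt n i) hni0]
      rw [SimpleGraph.dist_eq_one_iff_adj]
      by_cases hcase : i.val = n - 1
      · have hidx1 : i.val - 1 = L.length - 1 := by rw [hLlen]; omega
        have hidx2 : (nxt n i).val - 1 = 0 := by rw [hnv, if_pos hcase]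
        rw [hgetc _ _ _ (by omega) hidx1, hgetc _ _ _ (by rw [hLlen]; omega) hidx2]
        rw [hlast]
        exact hadj0 (by rw [hLlen]; omega)
      · have hidx2 : (nxt n i).val - 1 = (i.val - 1) + 1 := by
          rw [hnv, if_neg hcase]; omega
        rw [hgetc _ _ _ (by rw [hLlen]; omega) hidx2]
        exact hadjk (i.val - 1) (by rw [hLlen]; omega)
    rw [e1, e2, Nat.add_comm]
end
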